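/- For integers k ≥ i ≥ m ≥ 1: [k choose m]_q·[k-m choose i-m]_q - [k choose i]_q·[i-1 choose m-1]_q = q^m·[k choose i]_q·[i-1 choose m]_q. -/

import Mathlib

open Finset

noncomputable section

/-- q-number [n]_q = 1 + q + ... + q^{n-1} -/
def qNum (q : ℝ) (n : ℕ) : ℝ := ∑ i ∈ Finset.range n, q ^ i

/-- q-factorial [n]_q! -/
def qFact (q : ℝ) (n : ℕ) : ℝ := ∏ i ∈ Finset.range n, qNum q (i + 1)

/-- Gaussian binomial coefficient -/
def qBinom (q : ℝ) (n k : ℕ) : ℝ :=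
  if k ≤ n then qFact q n / (qFact q (n - k) * qFact q k) else 0

/-- q-Hermite polynomials H_n(x|q) -/
def qHermite (q x : ℝ) : ℕ → ℝ
  | 0 => 1
  | 1 => x
  | n + 2 => x * qHermite q x (n + 1) - qNum q (n + 1) * qHermite q x n

/-- Chebyshev polynomials of the second kind -/
def chebU (x : ℝ) : ℕ → ℝ
  | 0 => 1
  | 1 => 2 * x
  | n + 2 => 2 * x * chebU x (n + 1) - chebU x n

/-- probabilistic Hermite polynomials He_n -/
def hermiteHe (x : ℝ) : ℕ → ℝ
  | 0 => 1
  | 1 => x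
  | n + 2 => x * hermiteHe x (n + 1) - (n + 1 : ℝ) * hermiteHe x n

/-- Al-Salam–Chihara polynomials P_n(x|y,ρ,q) -/
def ascP (q y ρ x : ℝ) : ℕ → ℝ
  | 0 => 1
  | 1 => x - ρ * y
  | n + 2 => (x - ρ * y * q ^ (n + 1)) * ascP q y ρ x (n + 1)
      - (1 - ρ ^ 2 * q ^ n) * qNum q (n + 1) * ascP q y ρ x n


lemma qNum_pos (q : ℝ) (hq : |q| < 1) (n : ℕ) : 0 < qNum q (n + 1) := by
  have hq1 : q < 1 := lt_of_abs_lt hq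
  have hqn : q ^ (n+1) < 1 := by
    calc q ^ (n+1) ≤ |q ^ (n+1)| := le_abs_self _
    _ = |q| ^ (n+1) := abs_pow q (n+1)
    _ < 1 := pow_lt_one₀ (abs_nonneg q) hq (Nat.succ_ne_zero n)
  have hne : q ≠ 1 := ne_of_lt hq1
  have : qNum q (n+1) = (q ^ (n+1) - 1) / (q - 1) := by
    simp [qNum, geom_sum_eq hne]
  rw [this]
  exact div_pos_of_neg_of_neg (by linarith) (by linarith)

lemma qFact_ne (q : ℝ) (hq : |q| < 1) (n : ℕ) : qFact q n ≠ 0 := by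
  rw [qFact, Finset.prod_ne_zero_iff]
  exact fun i _ => ne_of_gt (qNum_pos q hq i)

lemma qFact_succ (q : ℝ) (n : ℕ) : qFact q (n + 1) = qFact q n * qNum q (n + 1) := by
  rw [qFact, Finset.prod_range_succ]; rfl

lemma qNum_add (q : ℝ) (n p : ℕ) : qNum q (n + p) = qNum q n + q ^ n * qNum q p := by
  rw [qNum, Finset.sum_range_add, qNum, qNum, Finset.mul_sum]
  simp [pow_add]

set_option maxHeartbeats 1000000 in
theorem qBinom_identity (q : ℝ) (hq : |q| < 1) (k i m : ℕ)
    (hm : 1 ≤ m) (hmi : m ≤ i) (hik : i ≤ k) :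
    qBinom q k m * qBinom q (k - m) (i - m) - qBinom q k i * qBinom q (i - 1) (m - 1) =
      q ^ m * qBinom q k i * qBinom q (i - 1) m := by
  have F := qFact_ne q hq
  rcases eq_or_lt_of_le hmi with rfl | h
  · -- m = i case
    have h1 : m - m = 0 := by omega
    have h2 : m - 1 - (m - 1) = 0 := by omega
    have hmm : ¬ (m ≤ m - 1) := by omega
    rw [h1, qBinom, qBinom, qBinom, if_pos hik, if_pos (Nat.zero_le _),
      if_pos (le_refl (m-1)), h2, qBinom, if_neg hmm]
    have hF0 : qFact q 0 = 1 := by simp [qFact]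
    rw [hF0]
    have hA := F (k - m); have hM := F m; have hY := F (m - 1)
    set A := qFact q k
    set X := qFact q (k - m)
    set M := qFact q m
    set Y := qFact q (m - 1)
    field_simp
    rw [Nat.sub_zero, show qFact q (k - m) = X from rfl, div_self hA]; ring
  · obtain ⟨a, rfl⟩ := Nat.exists_eq_add_of_lt h
    obtain ⟨b, rfl⟩ := Nat.exists_eq_add_of_le hik
    obtain ⟨c, rfl⟩ := Nat.exists_eq_succ_of_ne_zero (by omega : m ≠ 0)
    set K := c + 1 + a + 1 + b with hK
    have e1 : K - (c+1) = a + 1 + b := by omega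
    have e2 : (c+1) + a + 1 - (c+1) = a + 1 := by omega
    have e3 : (a+1+b) - (a+1) = b := by omega
    have e4 : K - ((c+1)+a+1) = b := by omega
    have e5 : (c+1)+a+1-1 = c + a + 1 := by omega
    have e6 : (c+1) - 1 = c := by omega
    have e7 : (c+a+1) - c = a + 1 := by omega
    have e8 : (c+a+1) - (c+1) = a := by omega
    rw [qBinom, qBinom, qBinom, qBinom, qBinom,
      if_pos (by omega : c+1 ≤ K), if_pos (by omega : (c+1)+a+1 ≤ K),
      e1, e2, e3, e4, e5, e6,
      if_pos (by omega : a+1 ≤ a+1+b), if_pos (by omega : c ≤ c+a+1),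
      if_pos (by omega : c+1 ≤ c+a+1), e7, e8]
    have f1 : qFact q ((c+1)+a+1) = qFact q (c+a+1) * qNum q (c+a+2) := by
      rw [show (c+1)+a+1 = (c+a+1)+1 by ring, qFact_succ]
    have f2 : qFact q (c+1) = qFact q c * qNum q (c+1) := qFact_succ q c
    have f3 : qFact q (a+1) = qFact q a * qNum q (a+1) := qFact_succ q a
    rw [f1, f2, f3]
    have hadd : qNum q (c+a+2) = qNum q (c+1) + q ^ (c+1) * qNum q (a+1) := by
      rw [show c+a+2 = (c+1)+(a+1) by ring, qNum_add]
    have n1 : qNum q (c+1) ≠ 0 := ne_of_gt (qNum_pos q hq c)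
    have n2 : qNum q (a+1) ≠ 0 := ne_of_gt (qNum_pos q hq a)
    have n3 : qNum q (c+a+2) ≠ 0 := ne_of_gt (qNum_pos q hq (c+a+1))
    set T := qFact q K
    set U := qFact q (a+1+b)
    set X := qFact q b
    set Y := qFact q c
    set Z := qFact q a
    set W := qFact q (c+a+1)
    set N1 := qNum q (c+1)
    set N2 := qNum q (a+1)
    set N3 := qNum q (c+a+2)
    have hX := F b; have hY := F c; have hZ := F a; have hW := F (c+a+1)
    have hU := F (a+1+b)
    change X ≠ 0 at hX; change Y ≠ 0 at hY; change Z ≠ 0 at hZ; change W ≠ 0 at hW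
    change U ≠ 0 at hU
    field_simp
    rw [hadd]
    simp only [Nat.succ_eq_add_one]
    ring
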